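/- Let C be an abelian category satisfying the minimal cover axiom, and let X be a non-negative chain complex in C such that X_n is projective for every n ≥ 0 and H_n(X) has projective dimension at most 1 for every n ≥ 0. Let m ≥ 0 be such that X_i = 0 for all i < m. Then X is isomorphic to S^m(P[m]) ⊕ X', where P[m] is the minimal projective resolution of H_m(X) and X' is a chain complex with X'_n projective for every n and H_m(X') = 0. -/

import Mathlib

open CategoryTheory CategoryTheory.Limits ZeroObject

universe v u

variable {C : Type u} [Category.{v} C] [Abelian C]

/-- `p : P ⟶ X` is a minimal projective cover. -/
def IsMinimalProjectiveCover {E : Type*} [Category E] {P X : E} (p : P ⟶ X) : Prop :=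
  Projective P ∧ Epi p ∧ ∀ φ : P ⟶ P, φ ≫ p = p → IsIso φ

/-- A category satisfies the minimal cover axiom if every object admits a minimal
projective cover. -/
def HasMinimalCovers (E : Type*) [Category E] : Prop :=
  ∀ X : E, ∃ (P : E) (p : P ⟶ X), IsMinimalProjectiveCover p

/-- Degrees of the disk `D^n(A)`: `A` in degrees `n` and `n - 1`, and `0` elsewhere
(for `n = 0`, `A` concentrated in degree `0`). -/
noncomputable def diskObj (n : ℕ) (A : C) : ℕ → C := fun i =>
  if i = n ∨ i + 1 = n then A else 0

/-- Differentials of the disk `D^n(A)`: the identity of `A` in degree `n`. -/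
noncomputable def diskD (n : ℕ) (A : C) :
    ∀ k : ℕ, diskObj n A (k + 1) ⟶ diskObj n A k := fun k =>
  if h : k + 1 = n then
    eqToHom (if_pos (Or.inl h)) ≫ eqToHom (if_pos (Or.inr h)).symm
  else 0

/-- The disk `D^n(A)`: the chain complex equal to `A` in degrees `n` and `n − 1` with
`n`-th boundary the identity, and `0` elsewhere; `D^0(A)` is `A` concentrated in
degree `0`. -/
noncomputable def disk (n : ℕ) (A : C) : ChainComplex C ℕ :=
  ChainComplex.of (diskObj n A) (diskD n A) (by
    intro k
    have h2 : ¬(k + 1 + 1 = n) ∨ ¬(k + 1 = n) := by omega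
    rcases h2 with h2 | h2 <;> simp [diskD, h2])

/-- Degrees of the suspension of a chain complex. -/
noncomputable def suspObj (X : ChainComplex C ℕ) : ℕ → C
  | 0 => 0
  | n + 1 => X.X n

/-- Differentials of the suspension of a chain complex. -/
noncomputable def suspD (X : ChainComplex C ℕ) :
    ∀ k : ℕ, suspObj X (k + 1) ⟶ suspObj X k
  | 0 => 0
  | k + 1 => X.d (k + 1) k

/-- The suspension `S(X)` of a non-negative chain complex `X`. -/
noncomputable def susp (X : ChainComplex C ℕ) : ChainComplex C ℕ :=
  ChainComplex.of (suspObj X) (suspD X) (by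
    intro k
    match k with
    | 0 => exact comp_zero
    | k + 1 => exact X.d_comp_d _ _ _)

/-- The `n`-fold suspension `Sⁿ(X)` of a non-negative chain complex `X`. -/
noncomputable def suspN : ℕ → ChainComplex C ℕ → ChainComplex C ℕ
  | 0, X => X
  | n + 1, X => susp (suspN n X)

/-- Degrees of the chain complex with `P0` in degree `0` and `P1` in degree `1`. -/
noncomputable def twoObj (P0 P1 : C) : ℕ → C
  | 0 => P0
  | 1 => P1
  | _ + 2 => 0

/-- Differentials of the chain complex with `P1 ⟶ P0` concentrated in degrees `1`, `0`. -/
noncomputable def twoD {P0 P1 : C} (d : P1 ⟶ P0) :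
    ∀ k : ℕ, twoObj P0 P1 (k + 1) ⟶ twoObj P0 P1 k
  | 0 => d
  | _ + 1 => 0

/-- The chain complex concentrated in degrees `0` and `1`, given by a morphism
`d : P1 ⟶ P0`. -/
noncomputable def twoComplex {P0 P1 : C} (d : P1 ⟶ P0) : ChainComplex C ℕ :=
  ChainComplex.of (twoObj P0 P1) (twoD d) (by
    intro k
    exact zero_comp)

/-- `IsMinimalLen1Resolution d p` expresses that `0 ⟶ P1 ⟶ P0 ⟶ A ⟶ 0` is a minimal
projective resolution of `A` of length at most 1: `d` is a monomorphism,
`p : P0 ⟶ A` is a minimal projective cover, and the induced morphism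
`P1 ⟶ ker p` is a minimal projective cover. -/
def IsMinimalLen1Resolution {P1 P0 A : C} (d : P1 ⟶ P0) (p : P0 ⟶ A) : Prop :=
  Mono d ∧ ∃ w : d ≫ p = 0,
    IsMinimalProjectiveCover p ∧ IsMinimalProjectiveCover (kernel.lift p d w)

/-- An object has projective dimension at most 1: it admits a projective resolution
`0 ⟶ P1 ⟶ P0 ⟶ A ⟶ 0` of length at most 1. -/
def ProjDimLE1 (A : C) : Prop :=
  ∃ (P1 P0 : C) (d : P1 ⟶ P0) (p : P0 ⟶ A) (w : d ≫ p = 0),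
    Projective P1 ∧ Projective P0 ∧ Mono d ∧ Epi p ∧ (ShortComplex.mk d p w).Exact

set_option linter.unusedSectionVars false

section Helpers

open HomologicalComplex

lemma projective_of_retract {A B : C} (r : A ⟶ B) (s : B ⟶ A) (hsr : s ≫ r = 𝟙 B)
    (hA : Projective A) : Projective B where
  factors {E F} f e he := by
    haveI := hA
    obtain ⟨g, hg⟩ := Projective.factors (r ≫ f) e
    exact ⟨s ≫ g, by rw [Category.assoc, hg, ← Category.assoc, hsr, Category.id_comp]⟩

lemma projective_of_isZero {A : C} (h : IsZero A) : Projective A where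
  factors {E F} f e he := ⟨0, by rw [zero_comp]; exact h.eq_of_src 0 f⟩

lemma mono_of_isZero_src {A B : C} (f : A ⟶ B) (h : IsZero A) : Mono f :=
  ⟨fun g g' _ => h.eq_of_tgt g g'⟩

lemma IsMinimalProjectiveCover.comp_iso {P A B : C} {p : P ⟶ A}
    (h : IsMinimalProjectiveCover p) (e : A ≅ B) : IsMinimalProjectiveCover (p ≫ e.hom) := by
  obtain ⟨h1, h2, h3⟩ := h
  haveI := h2
  refine ⟨h1, epi_comp _ _, fun φ hφ => h3 φ ?_⟩
  rw [← cancel_mono e.hom, Category.assoc]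
  exact hφ

lemma lift_of_exact {S : ShortComplex C} (hS : S.Exact) {P : C} (hP : Projective P)
    (u : P ⟶ S.X₂) (hu : u ≫ S.g = 0) : ∃ v : P ⟶ S.X₁, v ≫ S.f = u := by
  haveI := hS.epi_toCycles
  haveI := hP
  obtain ⟨v, hv⟩ := Projective.factors (S.liftCycles u hu) S.toCycles
  refine ⟨v, ?_⟩
  rw [← S.toCycles_i, ← Category.assoc, hv, S.liftCycles_i]

lemma isZero_of_epi_map_inl {D : Type*} {E : Type*} [Category D] [Category E]
    [Preadditive D] [Preadditive E] [HasBinaryBiproducts D]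
    (F : D ⥤ E) [F.Additive] (A B : D)
    (h : Epi (F.map (biprod.inl : A ⟶ A ⊞ B))) : IsZero (F.obj B) := by
  have h0 : F.map (biprod.snd : A ⊞ B ⟶ B) = 0 := by
    rw [← cancel_epi (F.map (biprod.inl : A ⟶ A ⊞ B)), ← F.map_comp, biprod.inl_snd,
      F.map_zero, comp_zero]
  rw [IsZero.iff_id_eq_zero, ← F.map_id, ← biprod.inr_snd, F.map_comp, h0, comp_zero]

lemma isZero_homology_of_epi_homologyMap {K L : ChainComplex C ℕ} (f : K ⟶ L) (i : ℕ)
    (hf : Epi (HomologicalComplex.homologyMap f i)) (M : ChainComplex C ℕ)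
    (e : L ≅ K ⊞ M) (he : biprod.inl ≫ e.inv = f) : IsZero (M.homology i) := by
  let F := HomologicalComplex.homologyFunctor C (ComplexShape.down ℕ) i
  have h1 : F.map (biprod.inl : K ⟶ K ⊞ M) = F.map f ≫ inv (F.map e.inv) := by
    rw [IsIso.eq_comp_inv, ← F.map_comp, he]
  haveI : Epi (F.map f) := hf
  have h2 : Epi (F.map (biprod.inl : K ⟶ K ⊞ M)) := by
    rw [h1]
    exact epi_comp _ _
  exact isZero_of_epi_map_inl F K M h2

lemma split_mono_iso_biprod {D : Type*} [Category D] [Abelian D] {A X : D}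
    (f : A ⟶ X) (r : X ⟶ A) (hfr : f ≫ r = 𝟙 A) :
    ∃ e : X ≅ A ⊞ kernel r, biprod.inl ≫ e.inv = f := by
  have hπ : (𝟙 X - r ≫ f) ≫ r = 0 := by
    rw [Preadditive.sub_comp, Category.id_comp, Category.assoc, hfr, Category.comp_id, sub_self]
  have hfk : f ≫ kernel.lift r _ hπ = 0 := by
    rw [← cancel_mono (kernel.ι r), Category.assoc, kernel.lift_ι, zero_comp,
      Preadditive.comp_sub, Category.comp_id, ← Category.assoc, hfr, Category.id_comp, sub_self]
  have hιk : kernel.ι r ≫ kernel.lift r _ hπ = 𝟙 _ := by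
    rw [← cancel_mono (kernel.ι r), Category.assoc, kernel.lift_ι, Category.id_comp,
      Preadditive.comp_sub, Category.comp_id, ← Category.assoc, kernel.condition, zero_comp,
      sub_zero]
  refine ⟨⟨biprod.lift r (kernel.lift r _ hπ), biprod.desc f (kernel.ι r), ?_, ?_⟩,
    biprod.inl_desc _ _⟩
  · rw [biprod.lift_desc, kernel.lift_ι]
    abel
  · apply biprod.hom_ext'
    · rw [biprod.inl_desc_assoc, Category.comp_id]
      apply biprod.hom_ext
      · rw [Category.assoc, biprod.lift_fst, hfr, biprod.inl_fst]
      · rw [Category.assoc, biprod.lift_snd, hfk, biprod.inl_snd]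
    · rw [biprod.inr_desc_assoc, Category.comp_id]
      apply biprod.hom_ext
      · rw [Category.assoc, biprod.lift_fst, kernel.condition, biprod.inr_fst]
      · rw [Category.assoc, biprod.lift_snd, hιk, biprod.inr_snd]

end Helpers
section Resolution

lemma kernel_cover_projective {A : C} (hA : ProjDimLE1 A) {P0 : C} {p : P0 ⟶ A}
    (hp : IsMinimalProjectiveCover p) : Projective (kernel p) := by
  obtain ⟨Q1, Q0, dq, q, wq, hQ1, hQ0, hdqmono, hqepi, hexact⟩ := hA
  obtain ⟨hP0, hpe, hmin⟩ := hp
  haveI := hpe; haveI := hqepi; haveI := hP0; haveI := hQ0; haveI := hdqmono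
  obtain ⟨t, ht⟩ := Projective.factors p q
  obtain ⟨s, hs⟩ := Projective.factors q p
  have he : IsIso (t ≫ s) := hmin _ (by rw [Category.assoc, hs, ht])
  set σ : P0 ⟶ Q0 := inv (t ≫ s) ≫ t with hσ
  have hσs : σ ≫ s = 𝟙 P0 := by rw [hσ, Category.assoc, IsIso.inv_comp_eq, Category.comp_id]
  have hker := hexact.fIsKernel
  have hα : (dq ≫ s) ≫ p = 0 := by
    rw [Category.assoc, hs]
    exact wq
  set α : Q1 ⟶ kernel p := kernel.lift p (dq ≫ s) hα with hαdef
  have hβw : (kernel.ι p ≫ σ) ≫ q = 0 := by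
    rw [Category.assoc, ← hs, ← Category.assoc σ s p, hσs, Category.id_comp, kernel.condition]
  obtain ⟨β, hβ⟩ := KernelFork.IsLimit.lift' hker (kernel.ι p ≫ σ) hβw
  simp only [KernelFork.ι_ofι] at hβ
  have hβα : β ≫ α = 𝟙 _ := by
    rw [← cancel_mono (kernel.ι p), Category.assoc, hαdef, kernel.lift_ι, Category.id_comp,
      ← Category.assoc, hβ, Category.assoc, hσs, Category.comp_id]
  exact projective_of_retract α β hβα hQ1

lemma exists_res (hC : HasMinimalCovers C) {A : C} (hA : ProjDimLE1 A) :
    ∃ (P1 P0 : C) (dP : P1 ⟶ P0) (p : P0 ⟶ A), IsMinimalLen1Resolution dP p := by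
  obtain ⟨P0, p, hp⟩ := hC A
  have hKproj := kernel_cover_projective hA hp
  obtain ⟨P1, g1, hP1, hg1e, hg1min⟩ := hC (kernel p)
  haveI := hg1e; haveI := hKproj
  obtain ⟨h, hh⟩ := Projective.factors (𝟙 (kernel p)) g1
  haveI : IsIso (g1 ≫ h) := hg1min _ (by rw [Category.assoc, hh, Category.comp_id])
  haveI hmono : Mono g1 := mono_of_mono g1 h
  have w : (g1 ≫ kernel.ι p) ≫ p = 0 := by rw [Category.assoc, kernel.condition, comp_zero]
  refine ⟨P1, P0, g1 ≫ kernel.ι p, p, mono_comp _ _, w, hp, ?_⟩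
  have hlift : kernel.lift p (g1 ≫ kernel.ι p) w = g1 := by
    rw [← cancel_mono (kernel.ι p), kernel.lift_ι]
  rw [hlift]
  exact ⟨hP1, hg1e, hg1min⟩

lemma projDimLE1_of_iso {A B : C} (e : A ≅ B) (h : ProjDimLE1 A) : ProjDimLE1 B := by
  obtain ⟨P1, P0, d, p, w, h1, h0, hmono, hepi, hex⟩ := h
  haveI := hepi
  refine ⟨P1, P0, d, p ≫ e.hom, by rw [← Category.assoc, w, zero_comp],
    h1, h0, hmono, epi_comp _ _, ?_⟩
  have hiso : ShortComplex.mk d p w ≅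
      ShortComplex.mk d (p ≫ e.hom) (by rw [← Category.assoc, w, zero_comp]) :=
    ShortComplex.isoMk (Iso.refl _) (Iso.refl _) e (by simp) (by simp)
  exact ShortComplex.exact_of_iso hiso hex

lemma IsMinimalLen1Resolution.comp_iso {P1 P0 A B : C} {dP : P1 ⟶ P0} {p : P0 ⟶ A}
    (h : IsMinimalLen1Resolution dP p) (e : A ≅ B) :
    IsMinimalLen1Resolution dP (p ≫ e.hom) := by
  obtain ⟨hmono, w, hp, hk⟩ := h
  have w' : dP ≫ p ≫ e.hom = 0 := by rw [← Category.assoc, w, zero_comp]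
  refine ⟨hmono, w', hp.comp_iso e, ?_⟩
  have key : kernel.lift (p ≫ e.hom) dP w' =
      kernel.lift p dP w ≫ (kernelCompMono p e.hom).symm.hom := by
    rw [← cancel_mono (kernel.ι (p ≫ e.hom))]
    simp [kernelCompMono]
  rw [key]
  exact hk.comp_iso (kernelCompMono p e.hom).symm

end Resolution
section Susp

/-- Shift a chain complex down by one. -/
noncomputable def unsusp (X : ChainComplex C ℕ) : ChainComplex C ℕ :=
  ChainComplex.of (fun n => X.X (n + 1)) (fun n => X.d (n + 2) (n + 1))
    (fun n => X.d_comp_d _ _ _)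

lemma unsusp_d (X : ChainComplex C ℕ) (n : ℕ) :
    (unsusp X).d (n + 1) n = X.d (n + 2) (n + 1) :=
  ChainComplex.of_d (fun n => X.X (n + 1)) (fun n => X.d (n + 2) (n + 1)) n

lemma susp_isZero_X_zero (Y : ChainComplex C ℕ) : IsZero ((susp Y).X 0) :=
  isZero_zero C

lemma susp_d_one_zero (Y : ChainComplex C ℕ) : (susp Y).d 1 0 = 0 :=
  ChainComplex.of_d (suspObj Y) (suspD Y) 0

lemma susp_d_succ (Y : ChainComplex C ℕ) (n : ℕ) :
    (susp Y).d (n + 2) (n + 1) = Y.d (n + 1) n :=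
  ChainComplex.of_d (suspObj Y) (suspD Y) (n + 1)

/-- The suspension of a chain map. -/
noncomputable def suspMap {Y Z : ChainComplex C ℕ} (φ : Y ⟶ Z) : susp Y ⟶ susp Z where
  f n := match n with
    | 0 => 0
    | n + 1 => φ.f n
  comm' := by
    intro i j hij
    obtain rfl : j + 1 = i := hij
    match j with
    | 0 => rw [susp_d_one_zero, susp_d_one_zero, comp_zero, zero_comp]
    | j + 1 =>
      rw [susp_d_succ, susp_d_succ]
      exact φ.comm (j + 1) j

@[simp] lemma suspMap_f_succ {Y Z : ChainComplex C ℕ} (φ : Y ⟶ Z) (n : ℕ) :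
    (suspMap φ).f (n + 1) = φ.f n := rfl

lemma suspMap_id (Y : ChainComplex C ℕ) : suspMap (𝟙 Y) = 𝟙 (susp Y) := by
  ext n
  match n with
  | 0 => exact (susp_isZero_X_zero Y).eq_of_src _ _
  | n + 1 => rfl

lemma suspMap_comp {Y Z W : ChainComplex C ℕ} (φ : Y ⟶ Z) (ψ : Z ⟶ W) :
    suspMap (φ ≫ ψ) = suspMap φ ≫ suspMap ψ := by
  ext n
  match n with
  | 0 => exact (susp_isZero_X_zero Y).eq_of_src _ _
  | n + 1 => rfl

lemma suspMap_add {Y Z : ChainComplex C ℕ} (φ ψ : Y ⟶ Z) :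
    suspMap (φ + ψ) = suspMap φ + suspMap ψ := by
  ext n
  match n with
  | 0 => exact (susp_isZero_X_zero Y).eq_of_src _ _
  | n + 1 => rfl

lemma suspMap_zero (Y Z : ChainComplex C ℕ) : suspMap (0 : Y ⟶ Z) = 0 := by
  ext n
  match n with
  | 0 => exact (susp_isZero_X_zero Y).eq_of_src _ _
  | n + 1 => rfl

/-- The suspension of an isomorphism. -/
noncomputable def suspMapIso {Y Z : ChainComplex C ℕ} (e : Y ≅ Z) : susp Y ≅ susp Z where
  hom := suspMap e.hom
  inv := suspMap e.inv
  hom_inv_id := by rw [← suspMap_comp, e.hom_inv_id, suspMap_id]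
  inv_hom_id := by rw [← suspMap_comp, e.inv_hom_id, suspMap_id]

/-- Suspension commutes with binary biproducts. -/
noncomputable def suspBiprod (A B : ChainComplex C ℕ) : susp (A ⊞ B) ≅ susp A ⊞ susp B where
  hom := biprod.lift (suspMap biprod.fst) (suspMap biprod.snd)
  inv := biprod.desc (suspMap biprod.inl) (suspMap biprod.inr)
  hom_inv_id := by
    rw [biprod.lift_desc, ← suspMap_comp, ← suspMap_comp, ← suspMap_add, biprod.total,
      suspMap_id]
  inv_hom_id := by
    apply biprod.hom_ext'
    · rw [biprod.inl_desc_assoc, Category.comp_id]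
      apply biprod.hom_ext
      · rw [Category.assoc, biprod.lift_fst, ← suspMap_comp, biprod.inl_fst, suspMap_id,
          biprod.inl_fst]
      · rw [Category.assoc, biprod.lift_snd, ← suspMap_comp, biprod.inl_snd, suspMap_zero,
          biprod.inl_snd]
    · rw [biprod.inr_desc_assoc, Category.comp_id]
      apply biprod.hom_ext
      · rw [Category.assoc, biprod.lift_fst, ← suspMap_comp, biprod.inr_fst, suspMap_zero,
          biprod.inr_fst]
      · rw [Category.assoc, biprod.lift_snd, ← suspMap_comp, biprod.inr_snd, suspMap_id,
          biprod.inr_snd]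

/-- A complex vanishing in degree `0` is the suspension of its desuspension. -/
noncomputable def isoSuspUnsusp (X : ChainComplex C ℕ) (h0 : IsZero (X.X 0)) :
    X ≅ susp (unsusp X) where
  hom :=
    { f := fun n => match n with
        | 0 => 0
        | n + 1 => 𝟙 (X.X (n + 1))
      comm' := by
        intro i j hij
        obtain rfl : j + 1 = i := hij
        match j with
        | 0 => rw [susp_d_one_zero, comp_zero, comp_zero]
        | j + 1 =>
          rw [susp_d_succ, unsusp_d]
          exact (Category.id_comp _).trans (Category.comp_id _).symm }
  inv :=
    { f := fun n => match n with
        | 0 => 0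
        | n + 1 => 𝟙 (X.X (n + 1))
      comm' := by
        intro i j hij
        obtain rfl : j + 1 = i := hij
        match j with
        | 0 =>
          rw [susp_d_one_zero, zero_comp]
          exact h0.eq_of_tgt _ _
        | j + 1 =>
          rw [susp_d_succ, unsusp_d]
          show 𝟙 (X.X (j + 1 + 1)) ≫ X.d (j + 1 + 1) (j + 1) =
            X.d (j + 2) (j + 1) ≫ 𝟙 (X.X (j + 1))
          simp }
  hom_inv_id := by
    ext n
    match n with
    | 0 => exact h0.eq_of_src _ _
    | n + 1 => exact Category.id_comp (𝟙 (X.X (n + 1)))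
  inv_hom_id := by
    ext n
    match n with
    | 0 => exact (susp_isZero_X_zero _).eq_of_src _ _
    | n + 1 => exact Category.id_comp (𝟙 (X.X (n + 1)))

end Susp
section SuspHomology

/-- Homology of a suspension in positive degrees. -/
noncomputable def suspHomologySucc (Y : ChainComplex C ℕ) (n : ℕ) :
    (susp Y).homology (n + 1) ≅ Y.homology n := by
  have e1 : (susp Y).sc (n + 1) ≅ (susp Y).sc' (n + 2) (n + 1) n :=
    (susp Y).isoSc' (n + 2) (n + 1) n (by simp) (by simp)
  match n with
  | 0 =>
    have e2 : Y.sc 0 ≅ Y.sc' 1 0 0 :=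
      Y.isoSc' 1 0 0 (by simp) (by simp)
    let φ : (susp Y).sc' 2 1 0 ⟶ Y.sc' 1 0 0 :=
      { τ₁ := 𝟙 (Y.X 1)
        τ₂ := 𝟙 (Y.X 0)
        τ₃ := 0
        comm₁₂ := by
          show 𝟙 (Y.X 1) ≫ Y.d 1 0 = (susp Y).d (0 + 2) (0 + 1) ≫ 𝟙 (Y.X 0)
          rw [susp_d_succ]
          simp only [Category.id_comp, Category.comp_id]
          exact (Category.comp_id (Y.d (0 + 1) 0)).symm
        comm₂₃ := by
          show 𝟙 (Y.X 0) ≫ Y.d 0 0 = (susp Y).d 1 0 ≫ 0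
          rw [comp_zero, Category.id_comp, Y.shape]
          · exact rfl
          · simp }
    have hiso : IsIso (ShortComplex.homologyMap φ) := by
      refine ShortComplex.isIso_homologyMap_of_epi_of_isIso_of_mono' φ ?_ ?_ ?_
      · show Epi (𝟙 (Y.X 1)); infer_instance
      · show IsIso (𝟙 (Y.X 0)); infer_instance
      · exact mono_of_isZero_src _ (susp_isZero_X_zero Y)
    exact ShortComplex.homologyMapIso e1 ≪≫ asIso (ShortComplex.homologyMap φ) ≪≫
      (ShortComplex.homologyMapIso e2).symm
  | n + 1 =>
    have e2 : Y.sc (n + 1) ≅ Y.sc' (n + 2) (n + 1) n :=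
      Y.isoSc' (n + 2) (n + 1) n (by simp) (by simp)
    have e3 : (susp Y).sc' (n + 3) (n + 2) (n + 1) ≅ Y.sc' (n + 2) (n + 1) n := by
      refine ShortComplex.isoMk (Iso.refl _) (Iso.refl _) (Iso.refl _) ?_ ?_
      · show 𝟙 (Y.X (n + 2)) ≫ Y.d (n + 2) (n + 1) = (susp Y).d (n + 1 + 2) (n + 1 + 1) ≫ 𝟙 _
        rw [susp_d_succ]
        simp only [Category.id_comp, Category.comp_id]
        exact (Category.comp_id _).symm
      · show 𝟙 (Y.X (n + 1)) ≫ Y.d (n + 1) n = (susp Y).d (n + 0 + 2) (n + 0 + 1) ≫ 𝟙 _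
        rw [susp_d_succ]
        simp only [Category.id_comp, Category.comp_id]
        exact (Category.comp_id _).symm
    exact ShortComplex.homologyMapIso e1 ≪≫ ShortComplex.homologyMapIso e3 ≪≫
      (ShortComplex.homologyMapIso e2).symm

end SuspHomology
section BaseCase

lemma base_case (hC : HasMinimalCovers C) (X : ChainComplex C ℕ)
    (hcof : ∀ n : ℕ, Projective (X.X n)) (hpd0 : ProjDimLE1 (X.homology 0)) :
    ∃ (P1 P0 : C) (dP : P1 ⟶ P0) (p : P0 ⟶ X.homology 0),
      IsMinimalLen1Resolution dP p ∧
      ∃ X' : ChainComplex C ℕ,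
        (∀ n : ℕ, Projective (X'.X n)) ∧ IsZero (X'.homology 0) ∧
          Nonempty (X ≅ twoComplex dP ⊞ X') := by
  obtain ⟨P1, P0, dP, p, hres⟩ := exists_res hC hpd0
  obtain ⟨hdmono, w, hpcov, hkcov⟩ := hres
  obtain ⟨hP0proj, hpepi, hpmin⟩ := hpcov
  haveI := hpepi; haveI := hdmono; haveI := hP0proj
  haveI := hcof 0; haveI := hcof 1
  -- the canonical epimorphism X.X 0 ⟶ X.homology 0
  have hd00 : X.d 0 0 = 0 := X.shape 0 0 (by simp)
  have hw0 : 𝟙 (X.X 0) ≫ X.d 0 0 = 0 := by rw [hd00, comp_zero]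
  set ℓ : X.X 0 ⟶ X.cycles 0 := X.liftCycles (𝟙 (X.X 0)) 0 ChainComplex.next_nat_zero hw0
    with hℓdef
  have hℓi : ℓ ≫ X.iCycles 0 = 𝟙 (X.X 0) := X.liftCycles_i _ _ _ _
  have hiℓ : X.iCycles 0 ≫ ℓ = 𝟙 (X.cycles 0) := by
    rw [← cancel_mono (X.iCycles 0), Category.assoc, hℓi, Category.comp_id, Category.id_comp]
  haveI : IsSplitEpi ℓ := ⟨⟨⟨X.iCycles 0, hiℓ⟩⟩⟩
  set πX : X.X 0 ⟶ X.homology 0 := ℓ ≫ X.homologyπ 0 with hπXdef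
  haveI : Epi πX := epi_comp _ _
  -- d 1 0 kills πX
  have hdℓ : X.d 1 0 ≫ ℓ = X.toCycles 1 0 := by
    rw [← cancel_mono (X.iCycles 0), Category.assoc, hℓi, Category.comp_id,
      HomologicalComplex.toCycles_i]
  have hdπ : X.d 1 0 ≫ πX = 0 := by
    rw [hπXdef, ← Category.assoc, hdℓ, HomologicalComplex.toCycles_comp_homologyπ]
  -- lift p to s : P0 ⟶ X.X 0
  obtain ⟨s, hs⟩ := Projective.factors p πX
  -- exactness of toCycles/homologyπ and the lift s1 : P1 ⟶ X.X 1
  have wtc : X.toCycles 1 0 ≫ X.homologyπ 0 = 0 := X.toCycles_comp_homologyπ 1 0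
  have hexact2 : (ShortComplex.mk (X.toCycles 1 0) (X.homologyπ 0) wtc).Exact := by
    apply ShortComplex.exact_of_g_is_cokernel
    exact X.homologyIsCokernel 1 0 (ChainComplex.prev ℕ 0)
  obtain ⟨hg1proj, hg1epi, hg1min⟩ := hkcov
  haveI := hg1epi
  have h3 : (dP ≫ s) ≫ πX = 0 := by rw [Category.assoc, hs, w]
  have hzπ : ((dP ≫ s) ≫ ℓ) ≫ X.homologyπ 0 = 0 := by
    rw [Category.assoc, ← hπXdef, h3]
  obtain ⟨s1, hs1⟩ := lift_of_exact hexact2 hg1proj ((dP ≫ s) ≫ ℓ) (by exact hzπ)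
  have hs1d : s1 ≫ X.d 1 0 = dP ≫ s := by
    have h2 : (s1 ≫ X.toCycles 1 0) ≫ X.iCycles 0 = ((dP ≫ s) ≫ ℓ) ≫ X.iCycles 0 := by
      rw [hs1]
    rw [Category.assoc, HomologicalComplex.toCycles_i, Category.assoc, hℓi,
      Category.comp_id] at h2
    exact h2
  -- retraction in degree 0
  obtain ⟨t₀, ht₀⟩ := Projective.factors πX p
  have he : IsIso (s ≫ t₀) := hpmin _ (by rw [Category.assoc, ht₀, hs])
  set t0 : X.X 0 ⟶ P0 := t₀ ≫ inv (s ≫ t₀) with ht0def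
  have hst : s ≫ t0 = 𝟙 P0 := by rw [ht0def, ← Category.assoc, IsIso.hom_inv_id]
  have hinvp : inv (s ≫ t₀) ≫ p = p := by
    rw [← cancel_epi (s ≫ t₀), ← Category.assoc, IsIso.hom_inv_id, Category.id_comp,
      Category.assoc, ht₀, hs]
  have ht0p : t0 ≫ p = πX := by rw [ht0def, Category.assoc, hinvp, ht₀]
  -- retraction in degree 1
  have hc : (X.d 1 0 ≫ t0) ≫ p = 0 := by rw [Category.assoc, ht0p, hdπ]
  set c : X.X 1 ⟶ kernel p := kernel.lift p (X.d 1 0 ≫ t0) hc with hcdef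
  obtain ⟨u, hu⟩ := Projective.factors c (kernel.lift p dP w)
  have hud : u ≫ dP = X.d 1 0 ≫ t0 := by
    rw [← kernel.lift_ι p dP w, ← Category.assoc, hu, hcdef, kernel.lift_ι]
  have hsu : s1 ≫ u = 𝟙 P1 := by
    rw [← cancel_mono dP, Category.assoc, hud, ← Category.assoc, hs1d, Category.assoc, hst,
      Category.comp_id, Category.id_comp]
  have hd2u : X.d 2 1 ≫ u = 0 := by
    rw [← cancel_mono dP, Category.assoc, hud, ← Category.assoc, X.d_comp_d, zero_comp,
      zero_comp]
  -- the chain maps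
  let fc : twoComplex dP ⟶ X :=
    { f := fun n => match n with
        | 0 => s
        | 1 => s1
        | _ + 2 => 0
      comm' := by
        intro i j hij
        obtain rfl : j + 1 = i := hij
        match j with
        | 0 =>
          show s1 ≫ X.d 1 0 = (twoComplex dP).d 1 0 ≫ s
          rw [show (twoComplex dP).d 1 0 = dP from ChainComplex.of_d (twoObj P0 P1) (twoD dP) 0, hs1d]
          exact rfl
        | 1 =>
          show (0 : (twoComplex dP).X 2 ⟶ X.X 2) ≫ X.d 2 1 = (twoComplex dP).d 2 1 ≫ s1
          rw [zero_comp, show (twoComplex dP).d 2 1 = 0 from ChainComplex.of_d (twoObj P0 P1) (twoD dP) 1]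
          exact zero_comp.symm
        | j + 2 =>
          show (0 : (twoComplex dP).X (j + 3) ⟶ X.X (j + 3)) ≫ X.d (j + 3) (j + 2) =
            (twoComplex dP).d (j + 3) (j + 2) ≫ 0
          rw [zero_comp, comp_zero] }
  let rc : X ⟶ twoComplex dP :=
    { f := fun n => match n with
        | 0 => t0
        | 1 => u
        | _ + 2 => 0
      comm' := by
        intro i j hij
        obtain rfl : j + 1 = i := hij
        match j with
        | 0 =>
          show u ≫ (twoComplex dP).d 1 0 = X.d 1 0 ≫ t0
          rw [show (twoComplex dP).d 1 0 = dP from ChainComplex.of_d (twoObj P0 P1) (twoD dP) 0]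
          exact hud
        | 1 =>
          show (0 : X.X 2 ⟶ (twoComplex dP).X 2) ≫ (twoComplex dP).d 2 1 = X.d 2 1 ≫ u
          rw [zero_comp, hd2u]
          exact rfl
        | j + 2 =>
          show (0 : X.X (j + 3) ⟶ (twoComplex dP).X (j + 3)) ≫
              (twoComplex dP).d (j + 3) (j + 2) = X.d (j + 3) (j + 2) ≫ 0
          rw [zero_comp, comp_zero] }
  have hfr : fc ≫ rc = 𝟙 (twoComplex dP) := by
    ext n
    match n with
    | 0 => show s ≫ t0 = 𝟙 P0; exact hst
    | 1 => show s1 ≫ u = 𝟙 P1; exact hsu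
    | n + 2 => exact (isZero_zero C).eq_of_src _ _
  obtain ⟨eIso, heIso⟩ := split_mono_iso_biprod fc rc hfr
  refine ⟨P1, P0, dP, p, ⟨hdmono, w, ⟨hP0proj, hpepi, hpmin⟩, hg1proj, hg1epi, hg1min⟩,
    kernel rc, ?_, ?_, ⟨eIso⟩⟩
  · intro n
    have hcomp : (biprod.inr ≫ eIso.inv) ≫ (eIso.hom ≫ biprod.snd) = 𝟙 (kernel rc) := by
      simp
    have hretr : (biprod.inr ≫ eIso.inv).f n ≫ (eIso.hom ≫ biprod.snd).f n =
        𝟙 ((kernel rc).X n) := by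
      rw [← HomologicalComplex.comp_f, hcomp]
      simp
    exact projective_of_retract _ _ hretr (hcof n)
  · -- IsZero ((kernel rc).homology 0)
    have hd00T : 𝟙 ((twoComplex dP).X 0) ≫ (twoComplex dP).d 0 0 = 0 := by
      rw [(twoComplex dP).shape 0 0 (by simp), comp_zero]
    have hfc0 : fc.f 0 = s := rfl
    set πT : (twoComplex dP).X 0 ⟶ (twoComplex dP).homology 0 :=
      (twoComplex dP).liftCycles (𝟙 ((twoComplex dP).X 0)) 0
        ChainComplex.next_nat_zero hd00T ≫ (twoComplex dP).homologyπ 0 with hπTdef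
    have hnat : πT ≫ HomologicalComplex.homologyMap fc 0 = s ≫ πX := by
      rw [hπTdef]
      rw [hπXdef, Category.assoc, HomologicalComplex.homologyπ_naturality,
        ← Category.assoc, HomologicalComplex.liftCycles_comp_cyclesMap]
      have h4 : X.liftCycles (𝟙 ((twoComplex dP).X 0) ≫ fc.f 0) 0 ChainComplex.next_nat_zero
          (by rw [Category.id_comp, hfc0, hd00]; exact comp_zero) = s ≫ ℓ := by
        have hk : (s ≫ ℓ) ≫ X.iCycles 0 = s := by rw [Category.assoc, hℓi, Category.comp_id]
        apply (cancel_mono (X.iCycles 0)).1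
        rw [HomologicalComplex.liftCycles_i, Category.id_comp, hfc0]
        exact hk.symm
      rw [h4]; exact Category.assoc _ _ _
    have hem : Epi (πT ≫ HomologicalComplex.homologyMap fc 0) := by
      rw [hnat, hs]
      exact hpepi
    haveI := hem
    have hem2 : Epi (HomologicalComplex.homologyMap fc 0) :=
      epi_of_epi πT (HomologicalComplex.homologyMap fc 0)
    exact isZero_homology_of_epi_homologyMap fc 0 hem2 (kernel rc) eIso heIso

end BaseCase

/-- **Statement 7.** Let `C` be an abelian category satisfying the minimal cover axiom and
`X` a non-negative chain complex in `C` with `X n` projective and `H_n(X)` of projective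
dimension at most 1 for every `n`.  If `X i = 0` for all `i < m`, then
`X ≅ Sᵐ(P[m]) ⊕ X'`, where `P[m]` is the minimal projective resolution of `H_m(X)` and `X'`
is a degreewise projective chain complex with `H_m(X') = 0`. -/
theorem splitting_off_minimal_resolution
    (hC : HasMinimalCovers C)
    (X : ChainComplex C ℕ) (hcof : ∀ n : ℕ, Projective (X.X n))
    (hpd : ∀ n : ℕ, ProjDimLE1 (X.homology n))
    (m : ℕ) (hm : ∀ i : ℕ, i < m → IsZero (X.X i)) :
    ∃ (P1 P0 : C) (dP : P1 ⟶ P0) (p : P0 ⟶ X.homology m),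
      IsMinimalLen1Resolution dP p ∧
      ∃ X' : ChainComplex C ℕ,
        (∀ n : ℕ, Projective (X'.X n)) ∧ IsZero (X'.homology m) ∧
          Nonempty (X ≅ suspN m (twoComplex dP) ⊞ X') := by
  induction m generalizing X with
  | zero =>
    obtain ⟨P1, P0, dP, p, hres, X', h1, h2, ⟨e⟩⟩ := base_case hC X hcof (hpd 0)
    exact ⟨P1, P0, dP, p, hres, X', h1, h2, ⟨e⟩⟩
  | succ m ih =>
    have h0 : IsZero (X.X 0) := hm 0 (Nat.succ_pos m)
    set Y : ChainComplex C ℕ := unsusp X with hYdef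
    have E : X ≅ susp Y := isoSuspUnsusp X h0
    -- homology comparison
    have hH : ∀ k : ℕ, X.homology (k + 1) ≅ Y.homology k := fun k =>
      (HomologicalComplex.homologyFunctor C (ComplexShape.down ℕ) (k + 1)).mapIso E ≪≫
        suspHomologySucc Y k
    obtain ⟨P1, P0, dP, p, hres, X'', h1, h2, ⟨e'⟩⟩ := ih Y
      (fun n => hcof (n + 1))
      (fun n => projDimLE1_of_iso (hH n) (hpd (n + 1)))
      (fun i hi => hm (i + 1) (by omega))
    refine ⟨P1, P0, dP, p ≫ (hH m).symm.hom, hres.comp_iso (hH m).symm, susp X'', ?_, ?_, ?_⟩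
    · intro n
      match n with
      | 0 => exact projective_of_isZero (susp_isZero_X_zero X'')
      | n + 1 => exact h1 n
    · exact h2.of_iso (suspHomologySucc X'' m)
    · exact ⟨E ≪≫ suspMapIso e' ≪≫ suspBiprod _ _⟩
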